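/- Let p be a prime and let G be a pro-p group such that G = AB, where A and B are two infinite procyclic closed normal subgroups of G. Then G is abelian. -/

import Mathlib

/-!  Basic notions for profinite groups.

A profinite group is modelled as a compact Hausdorff totally disconnected
topological group, via the instance assumptions
`[Group G] [TopologicalSpace G] [TopologicalGroup G] [CompactSpace G]
[T2Space G] [TotallyDisconnectedSpace G]`. -/

open scoped commutatorElement

/-- The set of primes dividing the order of some finite continuous quotient of `K`:
`p ∈ primesOf K` iff `p` is prime and divides the (finite) index of some open normal
subgroup of `K`. -/
def primesOf (K : Type*) [Group K] [TopologicalSpace K] : Set ℕ :=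
  {p | p.Prime ∧ ∃ N : Subgroup K, N.Normal ∧ IsOpen (N : Set K) ∧ N.index ≠ 0 ∧ p ∣ N.index}

/-- The closed subgroup topologically generated by `x`. -/
def closedGen {G : Type*} [Group G] [TopologicalSpace G] [IsTopologicalGroup G] (x : G) :
    Subgroup G :=
  (Subgroup.zpowers x).topologicalClosure

/-- `x` and `y` have coprime orders: `π(⟨x⟩) ∩ π(⟨y⟩) = ∅`. -/
def CoprimeOrders {G : Type*} [Group G] [TopologicalSpace G] [IsTopologicalGroup G] (x y : G) :
    Prop :=
  primesOf ↥(closedGen x) ∩ primesOf ↥(closedGen y) = ∅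

/-- `g` is a coprime commutator: `g = [x,y]` with `x, y` of coprime orders. -/
def IsCoprimeCommutator {G : Type*} [Group G] [TopologicalSpace G] [IsTopologicalGroup G]
    (g : G) : Prop :=
  ∃ x y : G, CoprimeOrders x y ∧ g = ⁅x, y⁆

/-- A topological group is procyclic if it is topologically generated by a single element. -/
def IsProcyclic (K : Type*) [Group K] [TopologicalSpace K] : Prop :=
  ∃ g : K, closure ((Subgroup.zpowers g : Subgroup K) : Set K) = Set.univ

/-- A subgroup of a topological group is procyclic if it is topologically generated by a
single element. -/
def IsProcyclicSubgroup {G : Type*} [Group G] [TopologicalSpace G] (H : Subgroup G) : Prop :=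
  ∃ g ∈ H, closure ((Subgroup.zpowers g : Subgroup G) : Set G) = (H : Set G)

/-- The pronilpotent residual `γ∞(G)`: the intersection of the terms of the lower central
series of `G` (each term taken as the corresponding closed subgroup). -/
def pronilpotentResidual (G : Type*) [Group G] [TopologicalSpace G] [IsTopologicalGroup G] :
    Subgroup G :=
  ⨅ n : ℕ, ((⊤ : Subgroup G).lowerCentralSeries n).topologicalClosure

/-- A profinite group is pronilpotent iff its pronilpotent residual is trivial. -/
def IsPronilpotent (K : Type*) [Group K] [TopologicalSpace K] [IsTopologicalGroup K] : Prop :=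
  pronilpotentResidual K = ⊥

/-- The quotient `K ⧸ N` is procyclic. -/
def QuotientIsProcyclic {K : Type*} [Group K] [TopologicalSpace K] (N : Subgroup K)
    (hN : N.Normal) : Prop :=
  letI := hN
  IsProcyclic (K ⧸ N)

/-- `K` is finite-by-procyclic: it has a finite normal subgroup with procyclic quotient. -/
def FiniteByProcyclic (K : Type*) [Group K] [TopologicalSpace K] : Prop :=
  ∃ (N : Subgroup K) (hN : N.Normal), Finite N ∧ QuotientIsProcyclic N hN

/-- The quotient `K ⧸ N` is pronilpotent. -/
def QuotientIsPronilpotent {K : Type*} [Group K] [TopologicalSpace K] [IsTopologicalGroup K]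
    (N : Subgroup K) (hN : N.Normal) : Prop :=
  letI := hN
  IsPronilpotent (K ⧸ N)

/-- The closed subgroup `[S,T]` generated by the commutators `⁅s,t⁆`, `s ∈ S`, `t ∈ T`. -/
def commClosure {G : Type*} [Group G] [TopologicalSpace G] [IsTopologicalGroup G]
    (S T : Set G) : Subgroup G :=
  (Subgroup.closure {z : G | ∃ s ∈ S, ∃ t ∈ T, z = ⁅s, t⁆}).topologicalClosure

private lemma my_eq_pow_of_prime_divisors {p : ℕ} (hp : p.Prime) :
    ∀ n : ℕ, n ≠ 0 → (∀ q : ℕ, q.Prime → q ∣ n → q = p) → ∃ e, n = p ^ e := by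
  intro n
  induction n using Nat.strong_induction_on with
  | _ n ih =>
    intro hn h
    rcases eq_or_ne n 1 with rfl | h1
    · exact ⟨0, rfl⟩
    · obtain ⟨q, hq, hqd⟩ := Nat.exists_prime_and_dvd h1
      have hqp := h q hq hqd
      subst hqp
      obtain ⟨m, rfl⟩ := hqd
      have hm0 : m ≠ 0 := by rintro rfl; simp at hn
      have hmlt : m < q * m := by
        have h2 := hq.one_lt
        have h3 := Nat.pos_of_ne_zero hm0
        nlinarith
      obtain ⟨e, rfl⟩ := ih m hmlt hm0 (fun r hr hrd => h r hr (hrd.mul_left q))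
      exact ⟨e + 1, by ring⟩

private lemma my_pow_gcd_mem_zpowers {H : Type*} [Group H] (x : H) (m : ℕ) :
    x ^ (Nat.gcd (orderOf x) m) ∈ Subgroup.zpowers (x ^ m) := by
  rw [Subgroup.mem_zpowers_iff]
  refine ⟨Nat.gcdB (orderOf x) m, ?_⟩
  have h1 : ((x ^ m : H) ^ (Nat.gcdB (orderOf x) m) : H)
      = x ^ ((Nat.gcd (orderOf x) m : ℤ)) := by
    rw [Nat.gcd_eq_gcd_ab, zpow_add, zpow_mul, zpow_mul, zpow_natCast, zpow_natCast,
      pow_orderOf_eq_one, one_zpow, one_mul]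
  rw [h1, zpow_natCast]

private lemma my_ratio_pow_mem {Q' Q : Type*} [Group Q'] [Group Q] (φ : Q' →* Q) {p : ℕ}
    (hp : p.Prime) {x' y' : Q'}
    (hx' : ∃ i, orderOf x' = p ^ i) (hx : ∃ i, orderOf (φ x') = p ^ i)
    (hy' : y' ∈ Subgroup.zpowers x') (hyne : φ y' ≠ 1) :
    x' ^ (orderOf (φ x') / orderOf (φ y')) ∈ Subgroup.zpowers y' := by
  obtain ⟨α', hα'⟩ := hx'
  obtain ⟨α, hα⟩ := hx
  have hX'0 : orderOf x' ≠ 0 := by rw [hα']; exact pow_ne_zero _ hp.ne_zero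
  have hX0 : orderOf (φ x') ≠ 0 := by rw [hα]; exact pow_ne_zero _ hp.ne_zero
  have hfinx' : IsOfFinOrder x' := by
    rw [← orderOf_pos_iff]; exact Nat.pos_of_ne_zero hX'0
  have hfinx : IsOfFinOrder (φ x') := by
    rw [← orderOf_pos_iff]; exact Nat.pos_of_ne_zero hX0
  obtain ⟨m, hm⟩ := hfinx'.mem_powers_iff_mem_zpowers.mpr hy'
  have hφy : φ y' = φ x' ^ m := by rw [← hm, map_pow]
  have hordy : orderOf (φ y') = orderOf (φ x') / Nat.gcd (orderOf (φ x')) m := by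
    rw [hφy, hfinx.orderOf_pow]
  have hdvd1 : Nat.gcd (orderOf x') m ∣ m := Nat.gcd_dvd_right _ _
  obtain ⟨j, hjle, hj⟩ :=
    (Nat.dvd_prime_pow hp).mp ((Nat.gcd_dvd_left (orderOf x') m).trans hα'.dvd)
  have hdvdX : Nat.gcd (orderOf x') m ∣ orderOf (φ x') := by
    by_contra hcon
    have hαj : α < j := by
      by_contra hle
      push_neg at hle
      exact hcon (by rw [hα, hj]; exact pow_dvd_pow p hle)
    have hdm : orderOf (φ x') ∣ m := by
      calc orderOf (φ x') = p ^ α := hα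
        _ ∣ p ^ j := pow_dvd_pow p hαj.le
        _ = Nat.gcd (orderOf x') m := hj.symm
        _ ∣ m := hdvd1
    exact hyne (by rw [hφy]; exact orderOf_dvd_iff_pow_eq_one.mp hdm)
  obtain ⟨t, ht⟩ := Nat.dvd_gcd hdvdX hdvd1
  have hXdiv : orderOf (φ x') / orderOf (φ y') = Nat.gcd (orderOf (φ x')) m := by
    rw [hordy, Nat.div_div_self (Nat.gcd_dvd_left _ _) hX0]
  rw [hXdiv, ht, pow_mul]
  exact Subgroup.pow_mem _ (hm ▸ my_pow_gcd_mem_zpowers x' m) t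

private lemma my_quot_mem_zpowers {G : Type*} [Group G] [TopologicalSpace G] [IsTopologicalGroup G]
    {a c : G} {M : Subgroup G} [M.Normal] (hM : IsOpen (M : Set G))
    (hc : c ∈ _root_.closure ((Subgroup.zpowers a : Subgroup G) : Set G)) :
    QuotientGroup.mk' M c ∈ Subgroup.zpowers (QuotientGroup.mk' M a) := by
  set K : Subgroup G := (Subgroup.zpowers (QuotientGroup.mk' M a)).comap (QuotientGroup.mk' M)
    with hK
  have hMK : M ≤ K := by
    intro g hg
    have h1 : (QuotientGroup.mk' M) g = 1 := (QuotientGroup.eq_one_iff g).mpr hg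
    simp only [hK, Subgroup.mem_comap, h1]
    exact Subgroup.one_mem _
  have hKopen : IsOpen (K : Set G) := Subgroup.isOpen_mono hMK hM
  have hKclosed : IsClosed (K : Set G) := Subgroup.isClosed_of_isOpen K hKopen
  have hsub : ((Subgroup.zpowers a : Subgroup G) : Set G) ⊆ (K : Set G) := by
    intro g hg
    obtain ⟨n, rfl⟩ := Subgroup.mem_zpowers_iff.mp (SetLike.mem_coe.mp hg)
    refine SetLike.mem_coe.mpr (Subgroup.mem_comap.mpr ?_)
    rw [map_zpow]
    exact Subgroup.zpow_mem _ (Subgroup.mem_zpowers _) n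
  exact SetLike.mem_coe.mp (closure_minimal hsub hKclosed hc)

private lemma my_closure_comm {G : Type*} [Group G] [TopologicalSpace G] [IsTopologicalGroup G]
    [T2Space G] {S : Set G} (h : ∀ x ∈ S, ∀ y ∈ S, x * y = y * x) :
    ∀ x ∈ closure S, ∀ y ∈ closure S, x * y = y * x := by
  have step : ∀ y ∈ S, ∀ x ∈ closure S, x * y = y * x := by
    intro y hy
    have hcl : IsClosed {x : G | x * y = y * x} :=
      isClosed_eq (continuous_id.mul continuous_const) (continuous_const.mul continuous_id)
    exact fun x hx => closure_minimal (fun z hz => h z hz y hy) hcl hx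
  intro x hx y hy
  have hcl : IsClosed {z : G | x * z = z * x} :=
    isClosed_eq (continuous_const.mul continuous_id) (continuous_id.mul continuous_const)
  exact closure_minimal (fun z hz => step z hz x hx) hcl hy

private lemma my_ordpow {G : Type*} [Group G] [TopologicalSpace G] [IsTopologicalGroup G]
    [CompactSpace G] {p : ℕ} (hp : p.Prime) (hGp : primesOf G ⊆ {p})
    (N : Subgroup G) (hN : N.Normal) (hNo : IsOpen (N : Set G)) :
    letI := hN
    ∀ z : G ⧸ N, ∃ i, orderOf z = p ^ i := by
  letI := hN
  intro z
  haveI : Finite (G ⧸ N) := N.quotient_finite_of_isOpen hNo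
  have hcard : Nat.card (G ⧸ N) ≠ 0 := Nat.card_pos.ne'
  have hprimes : ∀ q : ℕ, q.Prime → q ∣ Nat.card (G ⧸ N) → q = p := by
    intro q hq hqd
    have hmem : q ∈ primesOf G :=
      ⟨hq, N, hN, hNo, by rw [Subgroup.index_eq_card]; exact hcard,
        by rw [Subgroup.index_eq_card]; exact hqd⟩
    exact hGp hmem
  obtain ⟨e, he⟩ := my_eq_pow_of_prime_divisors hp _ hcard hprimes
  have hz : orderOf z ∣ p ^ e := he ▸ orderOf_dvd_natCard z
  obtain ⟨i, _, hi⟩ := (Nat.dvd_prime_pow hp).mp hz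
  exact ⟨i, hi⟩

private lemma my_factO {G : Type*} [Group G] [TopologicalSpace G] [IsTopologicalGroup G]
    [CompactSpace G] [T2Space G] [TotallyDisconnectedSpace G]
    {p : ℕ} (hp : p.Prime) (hGp : primesOf G ⊆ {p}) {a c : G}
    (hc : c ∈ _root_.closure ((Subgroup.zpowers a : Subgroup G) : Set G)) (hc1 : c ≠ 1) :
    ∃ r : ℕ, 0 < r ∧ a ^ r ∈ _root_.closure ((Subgroup.zpowers c : Subgroup G) : Set G) := by
  have hordpow := fun (N : Subgroup G) (hN : N.Normal) => my_ordpow hp hGp N hN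
  -- find an open normal subgroup avoiding c
  obtain ⟨V, hVclopen, h1V, hVc⟩ :=
    compact_exists_isClopen_in_isOpen (isOpen_compl_singleton (x := c))
      (by simpa using hc1.symm)
  obtain ⟨M, hM⟩ :=
    IsTopologicalGroup.exist_openNormalSubgroup_sub_clopen_nhds_of_one hVclopen h1V
  have hcM : c ∉ M.toSubgroup := fun hcm => hVc (hM hcm) rfl
  haveI : Finite (G ⧸ M.toSubgroup) :=
    M.toSubgroup.quotient_finite_of_isOpen M.toOpenSubgroup.isOpen
  set πM := QuotientGroup.mk' M.toSubgroup with hπM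
  have hπc : πM c ∈ Subgroup.zpowers (πM a) :=
    my_quot_mem_zpowers M.toOpenSubgroup.isOpen hc
  have hπc1 : πM c ≠ 1 := fun h => hcM ((QuotientGroup.eq_one_iff c).mp h)
  set r := orderOf (πM a) / orderOf (πM c) with hr
  have hdvd : orderOf (πM c) ∣ orderOf (πM a) := by
    have h1 := Subgroup.orderOf_dvd_natCard _ hπc
    rwa [Nat.card_zpowers] at h1
  have hposa : 0 < orderOf (πM a) := orderOf_pos _
  have hposc : 0 < orderOf (πM c) := orderOf_pos _
  have hr0 : 0 < r := Nat.div_pos (Nat.le_of_dvd hposa hdvd) hposc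
  refine ⟨r, hr0, ?_⟩
  rw [mem_closure_iff]
  intro U hUopen hUmem
  -- find an open normal subgroup inside {g | a ^ r * g ∈ U} ∩ M
  have hWopen : IsOpen ({g : G | a ^ r * g ∈ U} ∩ (M.toSubgroup : Set G)) :=
    ((hUopen.preimage (continuous_const.mul continuous_id)).inter M.toOpenSubgroup.isOpen)
  have h1W : (1 : G) ∈ {g : G | a ^ r * g ∈ U} ∩ (M.toSubgroup : Set G) :=
    ⟨by simpa using hUmem, Subgroup.one_mem _⟩
  obtain ⟨V', hV'clopen, h1V', hV'W⟩ := compact_exists_isClopen_in_isOpen hWopen h1W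
  obtain ⟨M', hM'⟩ :=
    IsTopologicalGroup.exist_openNormalSubgroup_sub_clopen_nhds_of_one hV'clopen h1V'
  have hM'W : (M'.toSubgroup : Set G) ⊆ {g : G | a ^ r * g ∈ U} ∩ (M.toSubgroup : Set G) :=
    fun g hg => hV'W (hM' hg)
  have hle : M'.toSubgroup ≤ M.toSubgroup := fun g hg => (hM'W hg).2
  haveI : Finite (G ⧸ M'.toSubgroup) :=
    M'.toSubgroup.quotient_finite_of_isOpen M'.toOpenSubgroup.isOpen
  set π' := QuotientGroup.mk' M'.toSubgroup with hπ'
  have hlecomap : M'.toSubgroup ≤ M.toSubgroup.comap (MonoidHom.id G) := hle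
  set φ := QuotientGroup.map M'.toSubgroup M.toSubgroup (MonoidHom.id G) hlecomap with hφ
  have hφa : φ (π' a) = πM a := rfl
  have hφc : φ (π' c) = πM c := rfl
  have hx' : ∃ i, orderOf (π' a) = p ^ i :=
    hordpow M'.toSubgroup M'.isNormal' M'.toOpenSubgroup.isOpen _
  have hx : ∃ i, orderOf (φ (π' a)) = p ^ i := by
    rw [hφa]; exact hordpow M.toSubgroup M.isNormal' M.toOpenSubgroup.isOpen _
  have hy' : π' c ∈ Subgroup.zpowers (π' a) :=
    my_quot_mem_zpowers M'.toOpenSubgroup.isOpen hc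
  have hyne : φ (π' c) ≠ 1 := by rw [hφc]; exact hπc1
  have hmain := my_ratio_pow_mem φ hp hx' hx hy' hyne
  rw [hφa, hφc] at hmain
  -- hmain : (π' a) ^ r ∈ zpowers (π' c)
  obtain ⟨n, hn⟩ := Subgroup.mem_zpowers_iff.mp hmain
  -- hn : (π' c) ^ n = (π' a) ^ r
  have hn' : π' (c ^ n) = π' (a ^ r) := by
    rw [map_zpow, map_pow]; exact hn
  have hw : (a ^ r)⁻¹ * c ^ n ∈ M'.toSubgroup := by
    have := QuotientGroup.eq.mp hn'.symm
    exact this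
  have hin : a ^ r * ((a ^ r)⁻¹ * c ^ n) ∈ U := (hM'W hw).1
  have hcn : (c ^ n : G) ∈ U := by
    rwa [mul_inv_cancel_left] at hin
  exact ⟨c ^ n, hcn, SetLike.mem_coe.mpr (Subgroup.zpow_mem _ (Subgroup.mem_zpowers _) n)⟩

/-- Let `p` be a prime and `G` a pro-`p` group (a profinite group with `π(G) ⊆ {p}`) such
that `G = AB`, where `A` and `B` are infinite procyclic closed normal subgroups. Then `G`
is abelian. -/
theorem comm_of_product_of_infinite_procyclic_normals
    {G : Type*} [Group G] [TopologicalSpace G] [IsTopologicalGroup G]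
    [CompactSpace G] [T2Space G] [TotallyDisconnectedSpace G]
    {p : ℕ} (hp : p.Prime) (hGp : primesOf G ⊆ {p})
    (A B : Subgroup G)
    (hAnormal : A.Normal) (hBnormal : B.Normal)
    (hAclosed : IsClosed (A : Set G)) (hBclosed : IsClosed (B : Set G))
    (hAproc : IsProcyclicSubgroup A) (hBproc : IsProcyclicSubgroup B)
    (hAinf : Infinite A) (hBinf : Infinite B)
    (hprod : ∀ g : G, ∃ a ∈ A, ∃ b ∈ B, g = a * b) :
    ∀ x y : G, x * y = y * x := by
  obtain ⟨a, haA, hA⟩ := hAproc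
  obtain ⟨b, hbB, hB⟩ := hBproc
  have hAmem : ∀ x : G, x ∈ A ↔ x ∈ closure ((Subgroup.zpowers a : Subgroup G) : Set G) := by
    intro x; rw [← SetLike.mem_coe, ← hA]
  have hBmem : ∀ x : G, x ∈ B ↔ x ∈ closure ((Subgroup.zpowers b : Subgroup G) : Set G) := by
    intro x; rw [← SetLike.mem_coe, ← hB]
  have hzpow_comm : ∀ g : G, ∀ u ∈ ((Subgroup.zpowers g : Subgroup G) : Set G),
      ∀ v ∈ ((Subgroup.zpowers g : Subgroup G) : Set G), u * v = v * u := by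
    intro g u hu v hv
    obtain ⟨m, rfl⟩ := Subgroup.mem_zpowers_iff.mp (SetLike.mem_coe.mp hu)
    obtain ⟨n, rfl⟩ := Subgroup.mem_zpowers_iff.mp (SetLike.mem_coe.mp hv)
    exact ((Commute.refl g).zpow_zpow m n).eq
  have hAcomm : ∀ x ∈ A, ∀ y ∈ A, x * y = y * x := by
    intro x hx y hy
    exact my_closure_comm (hzpow_comm a) x ((hAmem x).mp hx) y ((hAmem y).mp hy)
  have hBcomm : ∀ x ∈ B, ∀ y ∈ B, x * y = y * x := by
    intro x hx y hy
    exact my_closure_comm (hzpow_comm b) x ((hBmem x).mp hx) y ((hBmem y).mp hy)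
  obtain ⟨c, hc_def⟩ : ∃ c : G, c = a * b * a⁻¹ * b⁻¹ := ⟨_, rfl⟩
  have hcA : c ∈ A := by
    have h1 : b * a⁻¹ * b⁻¹ ∈ A := hAnormal.conj_mem a⁻¹ (A.inv_mem haA) b
    have h2 : a * (b * a⁻¹ * b⁻¹) ∈ A := A.mul_mem haA h1
    rw [hc_def]
    simpa [mul_assoc] using h2
  have hcB : c ∈ B := by
    have h1 : a * b * a⁻¹ ∈ B := hBnormal.conj_mem b hbB a
    have h2 : a * b * a⁻¹ * b⁻¹ ∈ B := B.mul_mem h1 (B.inv_mem hbB)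
    rw [hc_def]; exact h2
  have hP4 : ∀ n : ℕ, (a ^ n) * b * (a ^ n)⁻¹ * b⁻¹ = c ^ n := by
    intro n
    induction n with
    | zero => simp
    | succ n ih =>
      have hkey : a ^ (n + 1) * b * (a ^ (n + 1))⁻¹ * b⁻¹
          = (a ^ n * (a * b * a⁻¹ * b⁻¹) * (a ^ n)⁻¹) * (a ^ n * b * (a ^ n)⁻¹ * b⁻¹) := by
        group
      rw [hkey, ih, ← hc_def]
      have hcomm : a ^ n * c * (a ^ n)⁻¹ = c := by
        rw [hAcomm (a ^ n) (A.pow_mem haA n) c hcA, mul_inv_cancel_right]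
      rw [hcomm, ← pow_succ']
  by_cases hc1 : c = 1
  · -- c = 1 : the generators commute, hence everything commutes
    have hab : a * b = b * a := by
      have h := hc_def ▸ hc1
      -- h : a * b * a⁻¹ * b⁻¹ = 1  (after symm)
      have h' : a * b * a⁻¹ * b⁻¹ = 1 := by rw [← hc_def]; exact hc1
      rwa [mul_inv_eq_iff_eq_mul, one_mul, mul_inv_eq_iff_eq_mul] at h'
    have hAb : ∀ u ∈ A, u * b = b * u := by
      intro u hu
      have hcl : IsClosed {g : G | g * b = b * g} :=
        isClosed_eq (continuous_id.mul continuous_const) (continuous_const.mul continuous_id)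
      have hsub : ((Subgroup.zpowers a : Subgroup G) : Set G) ⊆ {g : G | g * b = b * g} := by
        intro g hg
        obtain ⟨m, rfl⟩ := Subgroup.mem_zpowers_iff.mp (SetLike.mem_coe.mp hg)
        exact ((show Commute a b from hab).zpow_left m).eq
      exact closure_minimal hsub hcl ((hAmem u).mp hu)
    have hABcomm : ∀ u ∈ A, ∀ v ∈ B, u * v = v * u := by
      intro u hu v hv
      have hcl : IsClosed {g : G | u * g = g * u} :=
        isClosed_eq (continuous_const.mul continuous_id) (continuous_id.mul continuous_const)
      have hsub : ((Subgroup.zpowers b : Subgroup G) : Set G) ⊆ {g : G | u * g = g * u} := by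
        intro g hg
        obtain ⟨m, rfl⟩ := Subgroup.mem_zpowers_iff.mp (SetLike.mem_coe.mp hg)
        exact ((show Commute u b from hAb u hu).zpow_right m).eq
      exact closure_minimal hsub hcl ((hBmem v).mp hv)
    intro x y
    obtain ⟨a₁, ha₁, b₁, hb₁, hx⟩ := hprod x
    obtain ⟨a₂, ha₂, b₂, hb₂, hy⟩ := hprod y
    subst hx; subst hy
    have h1 : Commute a₁ a₂ := hAcomm _ ha₁ _ ha₂
    have h2 : Commute a₁ b₂ := hABcomm _ ha₁ _ hb₂
    have h3 : Commute b₁ a₂ := (hABcomm _ ha₂ _ hb₁).symm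
    have h4 : Commute b₁ b₂ := hBcomm _ hb₁ _ hb₂
    exact ((h1.mul_right h2).mul_left (h3.mul_right h4)).eq
  · -- c ≠ 1 : contradiction with A infinite
    exfalso
    have hcclosA : c ∈ closure ((Subgroup.zpowers a : Subgroup G) : Set G) := (hAmem c).mp hcA
    obtain ⟨r, hr0, hmem⟩ := my_factO hp hGp hcclosA hc1
    have hcb : Commute c b := hBcomm c hcB b hbB
    have hzb : ∀ g ∈ ((Subgroup.zpowers c : Subgroup G) : Set G), g * b = b * g := by
      intro g hg
      obtain ⟨n, rfl⟩ := Subgroup.mem_zpowers_iff.mp (SetLike.mem_coe.mp hg)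
      exact (hcb.zpow_left n).eq
    have hclosed : IsClosed {g : G | g * b = b * g} :=
      isClosed_eq (continuous_id.mul continuous_const) (continuous_const.mul continuous_id)
    have habr : a ^ r * b = b * a ^ r := closure_minimal hzb hclosed hmem
    have hcr : c ^ r = 1 := by
      rw [← hP4 r, habr]
      group
    have hfinc : IsOfFinOrder c := isOfFinOrder_iff_pow_eq_one.mpr ⟨r, hr0, hcr⟩
    have hfinset : ((Subgroup.zpowers c : Subgroup G) : Set G).Finite := finite_zpowers.mpr hfinc
    have hmem' : a ^ r ∈ Subgroup.zpowers c := by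
      have h1 := hmem
      rw [hfinset.isClosed.closure_eq] at h1
      exact SetLike.mem_coe.mp h1
    have hfinar : IsOfFinOrder (a ^ r) := by
      rw [← finite_zpowers]
      exact hfinset.subset (SetLike.coe_subset_coe.mpr (Subgroup.zpowers_le.mpr hmem'))
    have hfina : IsOfFinOrder a := hfinar.of_pow hr0.ne'
    have hAfin : ((A : Set G)).Finite := by
      rw [← hA, (finite_zpowers.mpr hfina).isClosed.closure_eq]
      exact finite_zpowers.mpr hfina
    haveI hfinsub : Finite A := hAfin.to_subtype
    exact not_finite A
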